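/- For every nonnegative integer r, every n ∈ {2, …, N} and every f ∈ ℂ^N, ‖(P_n − P_{n−1}) f‖₂ ≤ (2 sin(1/2))^{−r} · ω_r(f, λ_n^{−1/2}). -/

import Mathlib

open Matrix

noncomputable section

/-- Euclidean (2-)norm on `ℂ^N`. -/
def cnorm2 {N : ℕ} (f : Fin N → ℂ) : ℝ := Real.sqrt (∑ i, ‖f i‖ ^ 2)

/-- The spectral operator `Σ_j c_j u_j u_j^*`. -/
def specOp {N : ℕ} (u : Fin N → Fin N → ℂ) (c : Fin N → ℂ) : Matrix (Fin N) (Fin N) ℂ :=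
  ∑ j, c j • Matrix.vecMulVec (u j) (star (u j))

/-- The graph translation operator `T_s = Σ_j e^{i s √λ_j} u_j u_j^*`. -/
def Tmat {N : ℕ} (u : Fin N → Fin N → ℂ) (lam : Fin N → ℝ) (s : ℝ) :
    Matrix (Fin N) (Fin N) ℂ :=
  specOp u (fun j => Complex.exp (Complex.I * (s : ℂ) * (Real.sqrt (lam j) : ℂ)))

/-- The `r`-th modulus of smoothness `ω_r(f,t) = sup_{|s| ≤ t} ‖(T_s - I)^r f‖₂`. -/
def omegaMod {N : ℕ} (u : Fin N → Fin N → ℂ) (lam : Fin N → ℝ) (r : ℕ) (f : Fin N → ℂ)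
    (t : ℝ) : ℝ :=
  ⨆ s : {s : ℝ // |s| ≤ t}, cnorm2 (((Tmat u lam s.1 - 1) ^ r).mulVec f)

section aux
variable {N : ℕ} (u : Fin N → Fin N → ℂ)

lemma hterm (z : ℂ) : (starRingEnd ℂ) z * z = (‖z‖ : ℂ) ^ 2 := by
  rw [mul_comm, Complex.mul_conj, Complex.normSq_eq_norm_sq]
  push_cast
  ring

lemma specOp_mulVec (c : Fin N → ℂ) (f : Fin N → ℂ) :
    (specOp u c).mulVec f = fun i => ∑ j, c j * (star (u j) ⬝ᵥ f) * u j i := by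
  ext i
  simp only [specOp, Matrix.mulVec, dotProduct, Matrix.sum_apply, Matrix.smul_apply,
    Matrix.vecMulVec_apply, Pi.star_apply, smul_eq_mul, Finset.sum_mul, Finset.mul_sum]
  rw [Finset.sum_comm]
  exact Finset.sum_congr rfl fun j _ => Finset.sum_congr rfl fun k _ => by ring

lemma cnorm2_expand (hu : ∀ i j, star (u i) ⬝ᵥ u j = if i = j then 1 else 0)
    (a : Fin N → ℂ) :
    ∑ i, ‖∑ j, a j * u j i‖ ^ 2 = ∑ j, ‖a j‖ ^ 2 := by
  have hu' : ∀ j k, (∑ i, (starRingEnd ℂ) (u j i) * u k i) = if j = k then (1:ℂ) else 0 := by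
    intro j k; simpa [dotProduct] using hu j k
  have key : ((∑ i, ‖∑ j, a j * u j i‖ ^ 2 : ℝ) : ℂ) = ((∑ j, ‖a j‖ ^ 2 : ℝ) : ℂ) := by
    push_cast
    calc (∑ i, (‖∑ j, a j * u j i‖ : ℂ) ^ 2)
        = ∑ i, (starRingEnd ℂ) (∑ j, a j * u j i) * (∑ j, a j * u j i) :=
          Finset.sum_congr rfl fun i _ => (hterm _).symm
      _ = ∑ i, ∑ j, ∑ k, (starRingEnd ℂ) (a j) * (starRingEnd ℂ) (u j i) * (a k * u k i) := by
          refine Finset.sum_congr rfl fun i _ => ?_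
          rw [map_sum, Finset.sum_mul]
          refine Finset.sum_congr rfl fun j _ => ?_
          rw [_root_.map_mul, Finset.mul_sum]
      _ = ∑ j, ∑ k, ((starRingEnd ℂ) (a j) * a k) * ∑ i, (starRingEnd ℂ) (u j i) * u k i := by
          rw [Finset.sum_comm]
          refine Finset.sum_congr rfl fun j _ => ?_
          rw [Finset.sum_comm]
          refine Finset.sum_congr rfl fun k _ => ?_
          rw [Finset.mul_sum]
          exact Finset.sum_congr rfl fun i _ => by ring
      _ = ∑ j, (starRingEnd ℂ) (a j) * a j := by
          refine Finset.sum_congr rfl fun j _ => ?_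
          simp [hu']
      _ = ∑ j, (‖a j‖ : ℂ) ^ 2 := by simp [hterm]
  exact_mod_cast key

lemma cnorm2_specOp_mulVec (hu : ∀ i j, star (u i) ⬝ᵥ u j = if i = j then 1 else 0)
    (c : Fin N → ℂ) (f : Fin N → ℂ) :
    cnorm2 ((specOp u c).mulVec f) =
      Real.sqrt (∑ j, ‖c j * (star (u j) ⬝ᵥ f)‖ ^ 2) := by
  rw [specOp_mulVec, cnorm2]
  congr 1
  exact cnorm2_expand u hu _

lemma specOp_one (hu : ∀ i j, star (u i) ⬝ᵥ u j = if i = j then 1 else 0) :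
    specOp u (fun _ => 1) = 1 := by
  set W : Matrix (Fin N) (Fin N) ℂ := Matrix.of (fun a j => u j a) with hW
  have h1 : Wᴴ * W = 1 := by
    ext i j
    simpa [Matrix.mul_apply, Matrix.conjTranspose_apply, hW, Matrix.one_apply,
      dotProduct] using hu i j
  have h2 : W * Wᴴ = 1 := (mul_eq_one_comm).mpr h1
  have : specOp u (fun _ => 1) = W * Wᴴ := by
    ext a b
    simp [specOp, Matrix.mul_apply, Matrix.conjTranspose_apply, hW,
      Matrix.sum_apply, Matrix.vecMulVec_apply]
  rw [this, h2]

lemma specOp_mul (hu : ∀ i j, star (u i) ⬝ᵥ u j = if i = j then 1 else 0)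
    (c d : Fin N → ℂ) :
    specOp u c * specOp u d = specOp u (fun j => c j * d j) := by
  have hvv : ∀ j k, Matrix.vecMulVec (u j) (star (u j)) * Matrix.vecMulVec (u k) (star (u k))
      = (star (u j) ⬝ᵥ u k) • Matrix.vecMulVec (u j) (star (u k)) := by
    intro j k
    ext a b
    simp only [Matrix.mul_apply, Matrix.vecMulVec_apply, Matrix.smul_apply, dotProduct,
      Pi.star_apply, smul_eq_mul, Finset.sum_mul, Finset.mul_sum]
    exact Finset.sum_congr rfl fun i _ => by ring
  unfold specOp
  rw [Finset.sum_mul_sum]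
  calc (∑ j, ∑ k, (c j • Matrix.vecMulVec (u j) (star (u j))) *
          (d k • Matrix.vecMulVec (u k) (star (u k))))
      = ∑ j, ∑ k, ((c j * d k) * if j = k then 1 else 0) •
          Matrix.vecMulVec (u j) (star (u k)) := by
        refine Finset.sum_congr rfl fun j _ => Finset.sum_congr rfl fun k _ => ?_
        rw [smul_mul_assoc, mul_smul_comm, hvv, hu, smul_smul, smul_smul]
    _ = ∑ j, (c j * d j) • Matrix.vecMulVec (u j) (star (u j)) := by
        refine Finset.sum_congr rfl fun j _ => ?_
        rw [Finset.sum_eq_single j]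
        · simp
        · intro k _ hk; simp [Ne.symm hk]
        · intro h; simp at h

lemma specOp_sub (c d : Fin N → ℂ) :
    specOp u c - specOp u d = specOp u (fun j => c j - d j) := by
  simp [specOp, sub_smul, Finset.sum_sub_distrib]

lemma specOp_pow (hu : ∀ i j, star (u i) ⬝ᵥ u j = if i = j then 1 else 0)
    (c : Fin N → ℂ) (r : ℕ) :
    (specOp u c) ^ r = specOp u (fun j => c j ^ r) := by
  induction r with
  | zero => simpa using (specOp_one u hu).symm
  | succ r ih =>
      rw [pow_succ, ih, specOp_mul u hu]
      simp [pow_succ]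

end aux

/-- Orthogonal projection `P_n = Σ_{j=1}^n u_j u_j^*` onto `span(u_1, …, u_n)`
(`u_k` corresponds to the index `k-1 : Fin N`). -/


def Pproj {N : ℕ} (u : Fin N → Fin N → ℂ) (n : ℕ) : Matrix (Fin N) (Fin N) ℂ :=
  specOp u (fun j => if (j : ℕ) < n then 1 else 0)

/-- For every nonnegative integer `r`, every `n ∈ {2, …, N}` and every
`f ∈ ℂ^N`, `‖(P_n - P_{n-1}) f‖₂ ≤ (2 sin(1/2))^{-r} · ω_r(f, λ_n^{-1/2})`. -/
theorem stmt3
    (N : ℕ) (hN : 2 ≤ N)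
    (u : Fin N → Fin N → ℂ)
    (hu : ∀ i j, star (u i) ⬝ᵥ u j = if i = j then 1 else 0)
    (lam : Fin N → ℝ) (hmono : Monotone lam)
    (hlam0 : lam ⟨0, by omega⟩ = 0) (hlam1 : 0 < lam ⟨1, by omega⟩)
    (r : ℕ) (n : ℕ) (hn2 : 2 ≤ n) (hnN : n ≤ N) (f : Fin N → ℂ) :
    cnorm2 ((Pproj u n - Pproj u (n - 1)).mulVec f) ≤
      ((2 * Real.sin (1 / 2))⁻¹) ^ r *
        omegaMod u lam r f (lam ⟨n - 1, by omega⟩ ^ (-(1 : ℝ) / 2)) := by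


  classical
  have hmN : n - 1 < N := by omega
  set m : Fin N := ⟨n - 1, hmN⟩ with hm
  set g : Fin N → ℂ := fun j => star (u j) ⬝ᵥ f with hg
  have hmpos : 0 < lam m := by
    refine lt_of_lt_of_le hlam1 (hmono ?_)
    simp [Fin.le_def, hm]; omega
  set t : ℝ := lam m ^ (-(1 : ℝ) / 2) with ht
  have htpos : 0 < t := Real.rpow_pos_of_pos hmpos _
  have ht1 : t * Real.sqrt (lam m) = 1 := by
    rw [ht, Real.sqrt_eq_rpow, ← Real.rpow_add hmpos]
    norm_num
  -- LHS equals ‖g m‖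
  have hchi : (fun j : Fin N =>
      ((if (j : ℕ) < n then (1 : ℂ) else 0) - if (j : ℕ) < n - 1 then 1 else 0))
      = fun j => if j = m then 1 else 0 := by
    funext j
    have hjm : (j = m) ↔ ((j : ℕ) = n - 1) := by simp [hm, Fin.ext_iff]
    by_cases h1 : (j : ℕ) < n - 1
    · have h2 : (j : ℕ) < n := by omega
      have h3 : ¬ j = m := by rw [hjm]; omega
      simp [h1, h2, h3]
    · by_cases h2 : (j : ℕ) < n
      · have h3 : j = m := by rw [hjm]; omega
        simp [h1, h2, h3]
        rw [← h3]; simp [h1, h2]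
      · have h3 : ¬ j = m := by rw [hjm]; omega
        simp [h1, h2, h3]
  have hLHS : cnorm2 ((Pproj u n - Pproj u (n - 1)).mulVec f) = ‖g m‖ := by
    rw [Pproj, Pproj, specOp_sub, hchi, cnorm2_specOp_mulVec u hu]
    have hterm' : ∀ j : Fin N, ‖(if j = m then (1 : ℂ) else 0) * (star (u j) ⬝ᵥ f)‖ ^ 2
        = if j = m then ‖g j‖ ^ 2 else 0 := by
      intro j; by_cases h : j = m <;> simp [h, hg]
    rw [Finset.sum_congr rfl fun j _ => hterm' j, Finset.sum_ite_eq' Finset.univ m]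
    simp [Real.sqrt_sq (norm_nonneg _)]
  -- spectral form of (T_s - 1)^r applied to f
  have hT : ∀ s : ℝ, cnorm2 (((Tmat u lam s - 1) ^ r).mulVec f)
      = Real.sqrt (∑ j, ‖(Complex.exp (Complex.I * (s : ℂ) * (Real.sqrt (lam j) : ℂ)) - 1) ^ r
          * g j‖ ^ 2) := by
    intro s
    rw [Tmat, ← specOp_one u hu, specOp_sub, specOp_pow u hu, cnorm2_specOp_mulVec u hu]
  -- uniform bound on the exponential coefficients
  have hEb : ∀ (s : ℝ) (j : Fin N),
      ‖Complex.exp (Complex.I * (s : ℂ) * (Real.sqrt (lam j) : ℂ)) - 1‖ ≤ 2 := by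
    intro s j
    have h1 : Complex.I * (s : ℂ) * (Real.sqrt (lam j) : ℂ)
        = ((s * Real.sqrt (lam j) : ℝ) : ℂ) * Complex.I := by push_cast; ring
    calc ‖Complex.exp (Complex.I * (s : ℂ) * (Real.sqrt (lam j) : ℂ)) - 1‖
        ≤ ‖Complex.exp (Complex.I * (s : ℂ) * (Real.sqrt (lam j) : ℂ))‖ + ‖(1 : ℂ)‖ :=
          norm_sub_le _ _
      _ = 2 := by
          rw [h1, Complex.norm_exp_ofReal_mul_I, norm_one]
          norm_num
  -- the sup is bounded above
  have hbdd : BddAbove (Set.range fun s : {s : ℝ // |s| ≤ t} =>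
      cnorm2 (((Tmat u lam s.1 - 1) ^ r).mulVec f)) := by
    refine ⟨(2 : ℝ) ^ r * Real.sqrt (∑ j, ‖g j‖ ^ 2), ?_⟩
    rintro x ⟨s, rfl⟩
    dsimp only
    rw [hT]
    have hsum : (∑ j, ‖(Complex.exp (Complex.I * (s.1 : ℂ) * (Real.sqrt (lam j) : ℂ)) - 1) ^ r
          * g j‖ ^ 2) ≤ ∑ j, ((2 : ℝ) ^ r * ‖g j‖) ^ 2 := by
      refine Finset.sum_le_sum fun j _ => ?_
      rw [norm_mul, norm_pow]
      have h2 := hEb s.1 j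
      have h3 : ‖Complex.exp (Complex.I * (s.1 : ℂ) * (Real.sqrt (lam j) : ℂ)) - 1‖ ^ r
          ≤ (2 : ℝ) ^ r := pow_le_pow_left₀ (norm_nonneg _) h2 r
      gcongr
    calc Real.sqrt _ ≤ Real.sqrt (∑ j, ((2 : ℝ) ^ r * ‖g j‖) ^ 2) := Real.sqrt_le_sqrt hsum
      _ = (2 : ℝ) ^ r * Real.sqrt (∑ j, ‖g j‖ ^ 2) := by
          simp_rw [mul_pow, ← Finset.mul_sum]
          rw [Real.sqrt_mul (by positivity), Real.sqrt_sq (by positivity)]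
  have hsup : cnorm2 (((Tmat u lam t - 1) ^ r).mulVec f) ≤ omegaMod u lam r f t :=
    le_ciSup hbdd ⟨t, le_of_eq (abs_of_pos htpos)⟩
  -- the value at s = t dominates (2 sin(1/2))^r ‖g m‖
  have hEm : Complex.exp (Complex.I * (t : ℂ) * (Real.sqrt (lam m) : ℂ))
      = Complex.exp Complex.I := by
    congr 1
    have h2 : ((t * Real.sqrt (lam m) : ℝ) : ℂ) = 1 := by rw [ht1]; norm_num
    calc Complex.I * (t : ℂ) * (Real.sqrt (lam m) : ℂ)
        = ((t * Real.sqrt (lam m) : ℝ) : ℂ) * Complex.I := by push_cast; ring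
      _ = Complex.I := by rw [h2, one_mul]
  have hsin : 0 < Real.sin (1 / 2) :=
    Real.sin_pos_of_pos_of_lt_pi (by norm_num) (by nlinarith [Real.pi_gt_three])
  have hnorm_exp : ‖Complex.exp Complex.I - 1‖ = 2 * Real.sin (1 / 2) := by
    have h1 : Complex.exp Complex.I - 1
        = ((Real.cos 1 - 1 : ℝ) : ℂ) + ((Real.sin 1 : ℝ) : ℂ) * Complex.I := by
      have : Complex.I = ((1 : ℝ) : ℂ) * Complex.I := by norm_num
      rw [this, Complex.exp_mul_I, ← Complex.ofReal_cos, ← Complex.ofReal_sin]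
      push_cast
      ring
    rw [h1, Complex.norm_def, Complex.normSq_add_mul_I]
    have hc : Real.cos 1 = 1 - 2 * Real.sin (1 / 2) ^ 2 := by
      have h2 : (1 : ℝ) = 2 * (1 / 2) := by norm_num
      rw [h2, Real.cos_two_mul', Real.cos_sq']
      ring
    have hs1 : Real.sin 1 ^ 2 = 1 - Real.cos 1 ^ 2 := by
      have := Real.sin_sq_add_cos_sq 1; linarith
    have key : (Real.cos 1 - 1) ^ 2 + Real.sin 1 ^ 2 = (2 * Real.sin (1 / 2)) ^ 2 := by
      rw [hs1, hc]; ring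
    rw [key, Real.sqrt_sq (by positivity)]
  have hsingle : (2 * Real.sin (1 / 2)) ^ r * ‖g m‖
      ≤ cnorm2 (((Tmat u lam t - 1) ^ r).mulVec f) := by
    rw [hT]
    have hterm : ‖(Complex.exp (Complex.I * (t : ℂ) * (Real.sqrt (lam m) : ℂ)) - 1) ^ r
        * g m‖ ^ 2 = ((2 * Real.sin (1 / 2)) ^ r * ‖g m‖) ^ 2 := by
      rw [norm_mul, norm_pow, hEm, hnorm_exp]
    have h1 : ((2 * Real.sin (1 / 2)) ^ r * ‖g m‖) ^ 2
        ≤ ∑ j, ‖(Complex.exp (Complex.I * (t : ℂ) * (Real.sqrt (lam j) : ℂ)) - 1) ^ r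
            * g j‖ ^ 2 := by
      rw [← hterm]
      exact Finset.single_le_sum
        (f := fun j => ‖(Complex.exp (Complex.I * (t : ℂ) * (Real.sqrt (lam j) : ℂ)) - 1) ^ r
          * g j‖ ^ 2) (fun j _ => by positivity) (Finset.mem_univ m)
    calc (2 * Real.sin (1 / 2)) ^ r * ‖g m‖
        = Real.sqrt (((2 * Real.sin (1 / 2)) ^ r * ‖g m‖) ^ 2) :=
          (Real.sqrt_sq (by positivity)).symm
      _ ≤ _ := Real.sqrt_le_sqrt h1
  calc cnorm2 ((Pproj u n - Pproj u (n - 1)).mulVec f) = ‖g m‖ := hLHS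
    _ = ((2 * Real.sin (1 / 2))⁻¹) ^ r * ((2 * Real.sin (1 / 2)) ^ r * ‖g m‖) := by
        rw [← mul_assoc, ← mul_pow, inv_mul_cancel₀ (by positivity), one_pow, one_mul]
    _ ≤ ((2 * Real.sin (1 / 2))⁻¹) ^ r * cnorm2 (((Tmat u lam t - 1) ^ r).mulVec f) :=
        mul_le_mul_of_nonneg_left hsingle (by positivity)
    _ ≤ ((2 * Real.sin (1 / 2))⁻¹) ^ r * omegaMod u lam r f t :=
        mul_le_mul_of_nonneg_left hsup (by positivity)
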